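/- arXiv:2005.13277 — 2 statements merged into one kernel-verified Lean document; each statement's English description precedes it below -/
import Mathlib

section
/- Consider the Couette boundary value problem on ℝ×[−1,1] with μ = 2𝟙_{x₂>0} + 𝟙_{x₂≤0}: the piecewise solution u₁ satisfies u₁(1) = a₊ and u₁(−1) = a₋ if and only if C = 4(a₋ − a₊) + 6C₁ and C₂ = 2a₊ − a₋ − 2C₁. In particular, for each C₁ ∈ ℝ there is exactly one such solution, so the boundary value problem has uncountably many solutions. -/
/-- The piecewise Couette profile. -/
noncomputable def couette (C C₁ C₂ : ℝ) (t : ℝ) : ℝ :=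
  if 0 < t then C / 4 * t ^ 2 + C₁ / 2 * t + C₂ else C / 2 * t ^ 2 + C₁ * t + C₂

/-- Couette boundary value problem on `ℝ×[-1,1]` with `μ = 2𝟙_{x₂>0} + 𝟙_{x₂≤0}`:
the profile satisfies `u₁(1) = a₊`, `u₁(-1) = a₋` iff `C = 4(a₋-a₊)+6C₁` and
`C₂ = 2a₊-a₋-2C₁`; in particular the solutions are injectively parametrized by
`C₁ ∈ ℝ`, so there are uncountably many of them. -/
theorem stmt10 (ap am : ℝ) :
    (∀ C C₁ C₂ : ℝ,
      (couette C C₁ C₂ 1 = ap ∧ couette C C₁ C₂ (-1) = am) ↔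
      (C = 4 * (am - ap) + 6 * C₁ ∧ C₂ = 2 * ap - am - 2 * C₁)) ∧
    Function.Injective (fun C₁ : ℝ =>
      couette (4 * (am - ap) + 6 * C₁) C₁ (2 * ap - am - 2 * C₁)) := by
  constructor
  · intro C C₁ C₂
    simp only [couette]
    norm_num
    constructor <;> intro h <;> constructor <;> linarith [h.1, h.2]
  · intro x y h
    have h0 := congrFun h 0
    simp only [couette] at h0
    norm_num at h0
    linarith
end

section
/- For u = rg(r)e_θ with g ∈ C² and μ = μ(r) ∈ C¹ on ℝ²∖{0}, the viscous term satisfies div(μ Su) = r^{-2} ∂_r(r³ μ ∂_r g) e_θ, where Su = ∇u + (∇u)^T. -/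
noncomputable def pd (f : ℝ × ℝ → ℝ) (v x : ℝ × ℝ) : ℝ := fderiv ℝ f x v

noncomputable def rad (x : ℝ × ℝ) : ℝ := Real.sqrt (x.1 ^ 2 + x.2 ^ 2)

lemma rad_pos {x : ℝ×ℝ} (hx : x ≠ 0) : 0 < rad x := by
  apply Real.sqrt_pos.mpr
  have : x.1 ≠ 0 ∨ x.2 ≠ 0 := by
    by_contra hc; push_neg at hc; exact hx (Prod.ext hc.1 hc.2)
  rcases this with h|h <;> positivity

lemma sq_rad (x : ℝ×ℝ) : rad x ^ 2 = x.1^2 + x.2^2 := Real.sq_sqrt (by positivity)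

lemma key (f : ℝ → ℝ) {x : ℝ × ℝ} (hx : x ≠ 0) (hf : DifferentiableAt ℝ f (rad x))
    (P : ℝ × ℝ → ℝ) (LP : (ℝ × ℝ) →L[ℝ] ℝ) (hP : HasFDerivAt P LP x) (v : ℝ × ℝ) :
    pd (fun z => f (rad z) * P z) v x
      = deriv f (rad x) * ((x.1 * v.1 + x.2 * v.2) / rad x) * P x + f (rad x) * LP v := by
  have hr : 0 < rad x := rad_pos hx
  have hq : HasFDerivAt (fun z : ℝ×ℝ => z.1^2+z.2^2)
      ((x.1 • ContinuousLinearMap.fst ℝ ℝ ℝ + x.1 • ContinuousLinearMap.fst ℝ ℝ ℝ) +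
       (x.2 • ContinuousLinearMap.snd ℝ ℝ ℝ + x.2 • ContinuousLinearMap.snd ℝ ℝ ℝ)) x := by
    have h1 : (fun z : ℝ×ℝ => z.1^2+z.2^2) = fun z : ℝ×ℝ => z.1*z.1+z.2*z.2 := by
      funext z; ring
    rw [h1]
    exact (hasFDerivAt_fst.mul hasFDerivAt_fst).add (hasFDerivAt_snd.mul hasFDerivAt_snd)
  have hsq : HasDerivAt Real.sqrt (1/(2*Real.sqrt (x.1^2+x.2^2))) (x.1^2+x.2^2) :=
    Real.hasDerivAt_sqrt (by nlinarith [sq_rad x, hr])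
  have hrad := hsq.comp_hasFDerivAt x hq
  have hcomp := (hf.hasDerivAt.comp_hasFDerivAt x hrad)
  have hmul := hcomp.mul hP
  have hfd := hmul.fderiv
  simp only [Function.comp_def] at hfd
  rw [pd, show (fun z => f (rad z) * P z) = (fun x => f (rad x)) * P from rfl, hfd]
  have hrne : rad x ≠ 0 := hr.ne'
  have hrr : Real.sqrt (x.1^2+x.2^2) = rad x := rfl
  simp only [Function.comp, ContinuousLinearMap.add_apply, ContinuousLinearMap.smul_apply,
    ContinuousLinearMap.coe_fst', ContinuousLinearMap.coe_snd', smul_eq_mul, hrr]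
  field_simp
  ring

noncomputable def hfun (μ g : ℝ → ℝ) (s : ℝ) : ℝ := μ s * deriv g s * s⁻¹

/-- For `u = rg(r)e_θ` with `g ∈ C²` and `μ = μ(r) ∈ C¹` on `ℝ²∖{0}`,
`div(μ Su) = r^{-2} ∂_r(r³ μ ∂_r g) e_θ`, where `Su = ∇u + (∇u)^T`. -/
theorem stmt13 (g : ℝ → ℝ) (hg : ContDiff ℝ 2 g)
    (μ : ℝ → ℝ) (hμ : ContDiff ℝ 1 μ)
    (u : ℝ × ℝ → ℝ × ℝ) (hu : ∀ x : ℝ × ℝ, u x = g (rad x) • ((x.2, -x.1) : ℝ × ℝ))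
    (S₁₁ S₁₂ S₂₂ : ℝ × ℝ → ℝ)
    (hS₁₁ : ∀ x, S₁₁ x = 2 * pd (fun y => (u y).1) (1, 0) x)
    (hS₁₂ : ∀ x, S₁₂ x = pd (fun y => (u y).1) (0, 1) x + pd (fun y => (u y).2) (1, 0) x)
    (hS₂₂ : ∀ x, S₂₂ x = 2 * pd (fun y => (u y).2) (0, 1) x) :
    ∀ x : ℝ × ℝ, x ≠ 0 →
      ((pd (fun z => μ (rad z) * S₁₁ z) (1, 0) x
          + pd (fun z => μ (rad z) * S₁₂ z) (0, 1) x,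
        pd (fun z => μ (rad z) * S₁₂ z) (1, 0) x
          + pd (fun z => μ (rad z) * S₂₂ z) (0, 1) x) : ℝ × ℝ)
        = (((rad x) ^ 2)⁻¹ * deriv (fun s => s ^ 3 * μ s * deriv g s) (rad x)) •
            ((x.2 / rad x, -x.1 / rad x) : ℝ × ℝ) := by
  intro x hx
  have hr : 0 < rad x := rad_pos hx
  have hgd : Differentiable ℝ g := hg.differentiable (by norm_num)
  have hdg : Differentiable ℝ (deriv g) := by
    have h2 : ContDiff ℝ ((1:ℕ)+1) g := by exact_mod_cast hg
    exact ((contDiff_succ_iff_deriv.mp h2).2.2).differentiable (by norm_num)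
  have hμd : Differentiable ℝ μ := hμ.differentiable (by norm_num)
  have hhdiff : ∀ s : ℝ, s ≠ 0 → DifferentiableAt ℝ (hfun μ g) s := by
    intro s hs
    exact ((hμd s).mul (hdg s)).mul (differentiableAt_fun_id.inv hs)
  have hu1 : (fun y => (u y).1) = fun y => g (rad y) * y.2 := by
    funext y; rw [hu]; simp [smul_eq_mul]
  have hu2 : (fun y => (u y).2) = fun y => g (rad y) * (-y.1) := by
    funext y; rw [hu]; simp [smul_eq_mul]; try ring
  -- S formulas away from the origin
  have hS11' : ∀ z : ℝ×ℝ, z ≠ 0 → μ (rad z) * S₁₁ z = hfun μ g (rad z) * (2*(z.1*z.2)) := by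
    intro z hz
    have hrz : (0:ℝ) < rad z := rad_pos hz
    rw [hS₁₁ z, hu1,
      key g hz (hgd _) (fun y => y.2) (ContinuousLinearMap.snd ℝ ℝ ℝ) hasFDerivAt_snd (1,0)]
    simp only [ContinuousLinearMap.coe_snd']
    unfold hfun
    field_simp
    all_goals first | ring1 | (left; ring1) | simp
  have hS12' : ∀ z : ℝ×ℝ, z ≠ 0 → μ (rad z) * S₁₂ z = hfun μ g (rad z) * (z.2*z.2 - z.1*z.1) := by
    intro z hz
    have hrz : (0:ℝ) < rad z := rad_pos hz
    rw [hS₁₂ z, hu1, hu2,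
      key g hz (hgd _) (fun y => y.2) (ContinuousLinearMap.snd ℝ ℝ ℝ) hasFDerivAt_snd (0,1),
      key g hz (hgd _) (fun y => -y.1) (-(ContinuousLinearMap.fst ℝ ℝ ℝ)) hasFDerivAt_fst.neg (1,0)]
    simp only [ContinuousLinearMap.coe_snd', ContinuousLinearMap.neg_apply,
      ContinuousLinearMap.coe_fst']
    unfold hfun
    field_simp
    all_goals first | ring1 | (left; ring1) | simp
  have hS22' : ∀ z : ℝ×ℝ, z ≠ 0 → μ (rad z) * S₂₂ z = hfun μ g (rad z) * (-(2*(z.1*z.2))) := by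
    intro z hz
    have hrz : (0:ℝ) < rad z := rad_pos hz
    rw [hS₂₂ z, hu2,
      key g hz (hgd _) (fun y => -y.1) (-(ContinuousLinearMap.fst ℝ ℝ ℝ)) hasFDerivAt_fst.neg (0,1)]
    simp only [ContinuousLinearMap.coe_snd', ContinuousLinearMap.neg_apply,
      ContinuousLinearMap.coe_fst']
    unfold hfun
    field_simp
    all_goals first | ring1 | (left; ring1) | simp
  have hne : ∀ᶠ z in nhds x, z ≠ (0:ℝ×ℝ) := eventually_ne_nhds hx
  -- replace pd's via eventual equality
  have e11 : ∀ v, pd (fun z => μ (rad z) * S₁₁ z) v x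
      = pd (fun z => hfun μ g (rad z) * (2*(z.1*z.2))) v x := by
    intro v; unfold pd
    rw [Filter.EventuallyEq.fderiv_eq (hne.mono fun z hz => hS11' z hz)]
  have e12 : ∀ v, pd (fun z => μ (rad z) * S₁₂ z) v x
      = pd (fun z => hfun μ g (rad z) * (z.2*z.2 - z.1*z.1)) v x := by
    intro v; unfold pd
    rw [Filter.EventuallyEq.fderiv_eq (hne.mono fun z hz => hS12' z hz)]
  have e22 : ∀ v, pd (fun z => μ (rad z) * S₂₂ z) v x
      = pd (fun z => hfun μ g (rad z) * (-(2*(z.1*z.2)))) v x := by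
    intro v; unfold pd
    rw [Filter.EventuallyEq.fderiv_eq (hne.mono fun z hz => hS22' z hz)]
  -- derivatives of the polynomial parts
  have hP1 : HasFDerivAt (fun z : ℝ×ℝ => 2*(z.1*z.2))
      ((2:ℝ) • (x.1 • ContinuousLinearMap.snd ℝ ℝ ℝ + x.2 • ContinuousLinearMap.fst ℝ ℝ ℝ)) x := by
    have := (hasFDerivAt_fst.mul (hasFDerivAt_snd (𝕜 := ℝ) (p := x))).const_mul (2:ℝ)
    convert this using 1
    try (ext v <;> simp <;> try ring)
    all_goals rfl
  have hP2 : HasFDerivAt (fun z : ℝ×ℝ => z.2*z.2 - z.1*z.1)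
      ((x.2 • ContinuousLinearMap.snd ℝ ℝ ℝ + x.2 • ContinuousLinearMap.snd ℝ ℝ ℝ) -
       (x.1 • ContinuousLinearMap.fst ℝ ℝ ℝ + x.1 • ContinuousLinearMap.fst ℝ ℝ ℝ)) x :=
    (hasFDerivAt_snd.mul hasFDerivAt_snd).sub (hasFDerivAt_fst.mul hasFDerivAt_fst)
  have hP3 : HasFDerivAt (fun z : ℝ×ℝ => -(2*(z.1*z.2)))
      (-((2:ℝ) • (x.1 • ContinuousLinearMap.snd ℝ ℝ ℝ + x.2 • ContinuousLinearMap.fst ℝ ℝ ℝ))) x :=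
    hP1.neg
  have hhx : DifferentiableAt ℝ (hfun μ g) (rad x) := hhdiff _ hr.ne'
  -- the four pd values
  rw [e11 (1,0), e12 (0,1), e12 (1,0), e22 (0,1),
    key (hfun μ g) hx hhx _ _ hP1 (1,0),
    key (hfun μ g) hx hhx _ _ hP2 (0,1),
    key (hfun μ g) hx hhx _ _ hP2 (1,0),
    key (hfun μ g) hx hhx _ _ hP3 (0,1)]
  -- RHS derivative
  have hD : deriv (fun s => s ^ 3 * μ s * deriv g s) (rad x)
      = 4*(rad x)^3 * hfun μ g (rad x) + (rad x)^4 * deriv (hfun μ g) (rad x) := by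
    have hEv : (fun s => s^3*μ s*deriv g s) =ᶠ[nhds (rad x)] fun s => s^4 * hfun μ g s := by
      filter_upwards [eventually_ne_nhds hr.ne'] with s hs
      unfold hfun; field_simp
    rw [hEv.deriv_eq]
    have hder := ((hasDerivAt_pow 4 (rad x)).mul (hhdiff _ hr.ne').hasDerivAt).deriv
    rw [show (fun s => s ^ 4 * hfun μ g s) = (fun x => x ^ 4) * hfun μ g from rfl, hder]
    try (push_cast; ring)
  rw [hD]
  have hrne : rad x ≠ 0 := hr.ne'
  have hsq := sq_rad x
  simp only [ContinuousLinearMap.add_apply, ContinuousLinearMap.smul_apply,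
    ContinuousLinearMap.sub_apply, ContinuousLinearMap.neg_apply,
    ContinuousLinearMap.coe_fst', ContinuousLinearMap.coe_snd', smul_eq_mul,
    Prod.smul_mk, Prod.mk.injEq]
  constructor
  · field_simp
    linear_combination (-(deriv (hfun μ g) (rad x) * x.2)) * hsq
  · field_simp
    linear_combination (deriv (hfun μ g) (rad x) * x.1) * hsq
end
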